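/- If 0 < γ < 1, the cubic x^3 + (2γ-1)x^2 + (γ(γ-1)-1)x + (1-2γ) has three distinct real roots; if γ < 0 or γ > 1, it has exactly one real root. -/
import Mathlib


theorem stmt_14 (γ : ℝ) :
    (let p : ℝ → ℝ := fun x =>
      x ^ 3 + (2 * γ - 1) * x ^ 2 + (γ * (γ - 1) - 1) * x + (1 - 2 * γ);
    (0 < γ → γ < 1 →
      ∃ a b c : ℝ, a ≠ b ∧ a ≠ c ∧ b ≠ c ∧ p a = 0 ∧ p b = 0 ∧ p c = 0) ∧
    (γ < 0 ∨ γ > 1 → ∃! x : ℝ, p x = 0)) := by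
  intro p
  have hp : ∀ x : ℝ, p x = x ^ 3 + (2 * γ - 1) * x ^ 2 + (γ * (γ - 1) - 1) * x + (1 - 2 * γ) :=
    fun x => rfl
  have hc : Continuous p := by
    have : p = fun x : ℝ =>
        x ^ 3 + (2 * γ - 1) * x ^ 2 + (γ * (γ - 1) - 1) * x + (1 - 2 * γ) := rfl
    rw [this]; continuity
  have ivt : ∀ u v : ℝ, u ≤ v → p u ≤ 0 → 0 ≤ p v → ∃ x, x ∈ Set.Icc u v ∧ p x = 0 := by
    intro u v huv h1 h2
    obtain ⟨x, hx, hpx⟩ := intermediate_value_Icc huv hc.continuousOn ⟨h1, h2⟩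
    exact ⟨x, hx, hpx⟩
  have ivt' : ∀ u v : ℝ, u ≤ v → 0 ≤ p u → p v ≤ 0 → ∃ x, x ∈ Set.Icc u v ∧ p x = 0 := by
    intro u v huv h1 h2
    obtain ⟨x, hx, hpx⟩ := intermediate_value_Icc' huv hc.continuousOn ⟨h2, h1⟩
    exact ⟨x, hx, hpx⟩
  constructor
  · intro h0 h1
    have e1 : p (-3) < 0 := by rw [hp]; nlinarith
    have e2 : 0 < p (-1) := by rw [hp]; nlinarith
    have e3 : p 1 < 0 := by rw [hp]; nlinarith
    have e4 : 0 < p 3 := by rw [hp]; nlinarith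
    obtain ⟨a, ha, hpa⟩ := ivt (-3) (-1) (by norm_num) e1.le e2.le
    obtain ⟨b, hb, hpb⟩ := ivt' (-1) 1 (by norm_num) e2.le e3.le
    obtain ⟨c, hcc, hpc⟩ := ivt 1 3 (by norm_num) e3.le e4.le
    have ha' : a < -1 := lt_of_le_of_ne ha.2 (by rintro rfl; linarith [e2, hpa.le, hpa.ge])
    have hb1 : -1 < b := lt_of_le_of_ne hb.1 (by rintro h; rw [← h] at hpb; linarith)
    have hb2 : b < 1 := lt_of_le_of_ne hb.2 (by rintro rfl; linarith [e3, hpb.le, hpb.ge])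
    have hc1 : 1 < c := lt_of_le_of_ne hcc.1 (by rintro h; rw [← h] at hpc; linarith)
    exact ⟨a, b, c, ne_of_lt (by linarith), ne_of_lt (by linarith), ne_of_lt (by linarith), hpa, hpb, hpc⟩
  · intro h
    have ht : 0 < γ * (γ - 1) := by
      rcases h with h | h
      · nlinarith
      · nlinarith
    -- existence
    set A1 := |2 * γ - 1| with hA1
    set A2 := |γ * (γ - 1) - 1| with hA2
    set A3 := |1 - 2 * γ| with hA3
    have hA1n : 0 ≤ A1 := abs_nonneg _
    have hA2n : 0 ≤ A2 := abs_nonneg _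
    have hA3n : 0 ≤ A3 := abs_nonneg _
    have hB1 : -A1 ≤ 2 * γ - 1 := neg_abs_le _
    have hB1' : 2 * γ - 1 ≤ A1 := le_abs_self _
    have hB2 : -A2 ≤ γ * (γ - 1) - 1 := neg_abs_le _
    have hB2' : γ * (γ - 1) - 1 ≤ A2 := le_abs_self _
    have hB3 : -A3 ≤ 1 - 2 * γ := neg_abs_le _
    have hB3' : 1 - 2 * γ ≤ A3 := le_abs_self _
    set M := 2 + A1 + A2 + A3 with hM
    have hM2 : 2 ≤ M := by simp [hM]; linarith
    have hpos : 0 ≤ p M := by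
      rw [hp]
      nlinarith [sq_nonneg M, mul_nonneg hA1n hA2n, mul_nonneg hA1n hA3n,
        mul_nonneg hA2n hA3n, sq_nonneg (M - A1), mul_nonneg (mul_nonneg hA1n hA2n) hA3n]
    have hneg : p (-M) ≤ 0 := by
      rw [hp]
      nlinarith [sq_nonneg M, mul_nonneg hA1n hA2n, mul_nonneg hA1n hA3n,
        mul_nonneg hA2n hA3n, mul_nonneg (mul_nonneg hA1n hA2n) hA3n]
    obtain ⟨x, _, hpx⟩ := ivt (-M) M (by linarith) hneg hpos
    refine ⟨x, hpx, ?_⟩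
    -- uniqueness
    intro y hpy
    by_contra hne
    have hxy : y - x ≠ 0 := sub_ne_zero.mpr hne
    rw [hp] at hpx hpy
    have hQ : x ^ 2 + x * y + y ^ 2 + (2 * γ - 1) * (x + y) + (γ * (γ - 1) - 1) = 0 := by
      have h0 : (y - x) * (x ^ 2 + x * y + y ^ 2 + (2 * γ - 1) * (x + y)
          + (γ * (γ - 1) - 1)) = 0 := by linear_combination hpy - hpx
      exact (mul_eq_zero.mp h0).resolve_left hxy
    obtain ⟨r, hr⟩ : ∃ r : ℝ, r = -(2 * γ - 1) - x - y := ⟨_, rfl⟩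
    have he1 : x + y + r = -(2 * γ - 1) := by rw [hr]; ring
    have he2 : x * y + x * r + y * r = γ * (γ - 1) - 1 := by
      rw [hr]; linear_combination -hQ
    have he3 : x * y * r = -(1 - 2 * γ) := by
      rw [hr]; linear_combination hpx - x * hQ
    have key : ((x - y) * (x - r) * (y - r)) ^ 2 =
        (x + y + r) ^ 2 * (x * y + x * r + y * r) ^ 2
          - 4 * (x * y + x * r + y * r) ^ 3
          - 4 * (x + y + r) ^ 3 * (x * y * r)
          + 18 * (x + y + r) * (x * y + x * r + y * r) * (x * y * r)
          - 27 * (x * y * r) ^ 2 := by ring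
    rw [he1, he2, he3] at key
    nlinarith [sq_nonneg ((x - y) * (x - r) * (y - r)), key, ht, mul_pos ht ht]
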